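/- Let g ≥ 3 be odd and let P ∈ POLss_{g,m×m} be a skew-symmetric matrix polynomial of grade g whose leading coefficient (the coefficient of λ^g) is the zero matrix. Write F_P = λA − B for its linearization and set n = mg. Then for every matrix X ∈ ℂ^{n×n}, the top-left m×m block of Xᵀ A + A X is the zero matrix; consequently, the top-left m×m block of the λ-coefficient of every pencil λ(XᵀA + AX) − (XᵀB + BX) in the tangent space to the congruence orbit of F_P is zero. -/

import Mathlib

open Matrix

noncomputable section

abbrev Mat (n : ℕ) := Matrix (Fin n) (Fin n) ℂ

/-- The matrix `X·A − B` over the field of rational functions `ℂ(X)`. -/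
def pencilRatMat {ι : Type} [Fintype ι] (A B : Matrix ι ι ℂ) :
    Matrix ι ι (RatFunc ℂ) :=
  Matrix.of fun i j =>
    RatFunc.X * algebraMap ℂ (RatFunc ℂ) (A i j) - algebraMap ℂ (RatFunc ℂ) (B i j)

/-- The normal rank of the pencil `λA − B`. -/
def pencilRank {ι : Type} [Fintype ι] (A B : Matrix ι ι ℂ) : ℕ :=
  (pencilRatMat A B).rank

/-- `G_k`: the `k×(k+1)` matrix with ones on the main diagonal. -/
def Gmat (k : ℕ) : Matrix (Fin k) (Fin (k+1)) ℂ :=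
  Matrix.of fun i j => if (j : ℕ) = (i : ℕ) then 1 else 0

/-- `F_k`: the `k×(k+1)` matrix with ones on the superdiagonal. -/
def Fmat (k : ℕ) : Matrix (Fin k) (Fin (k+1)) ℂ :=
  Matrix.of fun i j => if (j : ℕ) = (i : ℕ) + 1 then 1 else 0

/-- `J_k(0)`: the `k×k` nilpotent Jordan block. -/
def Jnil (k : ℕ) : Matrix (Fin k) (Fin k) ℂ :=
  Matrix.of fun i j => if (j : ℕ) = (i : ℕ) + 1 then 1 else 0

/-- λ-coefficient of the canonical block `M_k`. -/
def MAm (k : ℕ) : Matrix (Fin k ⊕ Fin (k+1)) (Fin k ⊕ Fin (k+1)) ℂ :=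
  Matrix.fromBlocks 0 (Gmat k) (-(Gmat k)ᵀ) 0

/-- constant coefficient of the canonical block `M_k`. -/
def MBm (k : ℕ) : Matrix (Fin k ⊕ Fin (k+1)) (Fin k ⊕ Fin (k+1)) ℂ :=
  Matrix.fromBlocks 0 (Fmat k) (-(Fmat k)ᵀ) 0

/-- λ-coefficient of the canonical block `K_k`. -/
def KAm (k : ℕ) : Matrix (Fin k ⊕ Fin k) (Fin k ⊕ Fin k) ℂ :=
  Matrix.fromBlocks 0 (Jnil k) (-(Jnil k)ᵀ) 0

/-- constant coefficient of the canonical block `K_k`. -/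
def KBm (k : ℕ) : Matrix (Fin k ⊕ Fin k) (Fin k ⊕ Fin k) ℂ :=
  Matrix.fromBlocks 0 1 (-1) 0

/-- Index type for the block-diagonal pencil `𝒲`:
`s` copies of `M_{α+1}`, `t` copies of `M_α`, `r` copies of `K_1`. -/
abbrev WIdx (s t r : ℕ) : Type := (Fin s ⊕ Fin t) ⊕ Fin r

/-- Sizes of the diagonal blocks of `𝒲`. -/
def WSize (α : ℕ) {s t r : ℕ} : WIdx s t r → ℕ
  | Sum.inl (Sum.inl _) => (α + 1) + (α + 1 + 1)
  | Sum.inl (Sum.inr _) => α + (α + 1)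
  | Sum.inr _ => 1 + 1

/-- Diagonal blocks of the λ-coefficient of `𝒲`. -/
def WBlkA (α : ℕ) {s t r : ℕ} :
    (i : WIdx s t r) → Matrix (Fin (WSize α i)) (Fin (WSize α i)) ℂ
  | Sum.inl (Sum.inl _) => Matrix.reindex finSumFinEquiv finSumFinEquiv (MAm (α + 1))
  | Sum.inl (Sum.inr _) => Matrix.reindex finSumFinEquiv finSumFinEquiv (MAm α)
  | Sum.inr _ => Matrix.reindex finSumFinEquiv finSumFinEquiv (KAm 1)

/-- Diagonal blocks of the constant coefficient of `𝒲`. -/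
def WBlkB (α : ℕ) {s t r : ℕ} :
    (i : WIdx s t r) → Matrix (Fin (WSize α i)) (Fin (WSize α i)) ℂ
  | Sum.inl (Sum.inl _) => Matrix.reindex finSumFinEquiv finSumFinEquiv (MBm (α + 1))
  | Sum.inl (Sum.inr _) => Matrix.reindex finSumFinEquiv finSumFinEquiv (MBm α)
  | Sum.inr _ => Matrix.reindex finSumFinEquiv finSumFinEquiv (KBm 1)

/-- λ-coefficient of `𝒲 = diag(M_{α+1}×s, M_α×t, K_1×r)`, reindexed to `Fin n`. -/
def WpencilA (α : ℕ) {s t r n : ℕ}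
    (e : (Σ i : WIdx s t r, Fin (WSize α i)) ≃ Fin n) : Mat n :=
  Matrix.reindex e e (Matrix.blockDiagonal' (WBlkA α))

/-- constant coefficient of `𝒲`, reindexed to `Fin n`. -/
def WpencilB (α : ℕ) {s t r n : ℕ}
    (e : (Σ i : WIdx s t r, Fin (WSize α i)) ≃ Fin n) : Mat n :=
  Matrix.reindex e e (Matrix.blockDiagonal' (WBlkB α))

/-- Congruence orbit of a pencil `(A,B)`, identified with pairs of matrices. -/
def congOrbit {n : ℕ} (W : Mat n × Mat n) : Set (Mat n × Mat n) :=
  {p | ∃ S : Mat n, IsUnit S ∧ p = (Sᵀ * W.1 * S, Sᵀ * W.2 * S)}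

end

noncomputable section

/-- The matrix polynomial `Σ_{k=0}^{d} X^k·(P k)` viewed over the field `ℂ(X)`. -/
def polyRatMat {m d : ℕ} (P : Fin (d + 1) → Mat m) :
    Matrix (Fin m) (Fin m) (RatFunc ℂ) :=
  Matrix.of fun i j =>
    ∑ k : Fin (d + 1), algebraMap ℂ (RatFunc ℂ) (P k i j) * RatFunc.X ^ (k : ℕ)

/-- The (normal) rank of a matrix polynomial, given by its coefficients, over `ℂ(X)`. -/
def polyRank {m d : ℕ} (P : Fin (d + 1) → Mat m) : ℕ :=
  (polyRatMat P).rank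

/-- λ-coefficient of the skew-symmetric linearization `F_P` of a skew-symmetric matrix
polynomial of odd grade `g` with coefficients `P 0, …, P g` (block entry `(k,l)` is the
`(k+1,l+1)` block in the 1-based description). -/
def linA (m g : ℕ) (P : Fin (g + 1) → Mat m) :
    Matrix (Fin g × Fin m) (Fin g × Fin m) ℂ :=
  Matrix.of fun p q =>
    if p.1 = q.1 then
      (if (p.1 : ℕ) % 2 = 0 then
        P ⟨g - (p.1 : ℕ), Nat.lt_succ_of_le (Nat.sub_le g _)⟩ p.2 q.2
      else 0)
    else if (q.1 : ℕ) = (p.1 : ℕ) + 1 ∧ (p.1 : ℕ) % 2 = 1 then -((1 : Mat m) p.2 q.2)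
    else if (p.1 : ℕ) = (q.1 : ℕ) + 1 ∧ (q.1 : ℕ) % 2 = 1 then (1 : Mat m) p.2 q.2
    else 0

/-- Constant coefficient of the skew-symmetric linearization `F_P`. -/
def linB (m g : ℕ) (P : Fin (g + 1) → Mat m) :
    Matrix (Fin g × Fin m) (Fin g × Fin m) ℂ :=
  Matrix.of fun p q =>
    if p.1 = q.1 then
      (if (p.1 : ℕ) % 2 = 0 then
        -(P ⟨g - ((p.1 : ℕ) + 1), Nat.lt_succ_of_le (Nat.sub_le g _)⟩ p.2 q.2)
      else 0)
    else if (q.1 : ℕ) = (p.1 : ℕ) + 1 ∧ (p.1 : ℕ) % 2 = 0 then (1 : Mat m) p.2 q.2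
    else if (p.1 : ℕ) = (q.1 : ℕ) + 1 ∧ (q.1 : ℕ) % 2 = 0 then -((1 : Mat m) p.2 q.2)
    else 0

/-- A polynomial of grade `d` regarded as a polynomial of grade `d+1`
(with zero coefficient of `λ^{d+1}`). -/
def extendPoly {m d : ℕ} (Q : Fin (d + 1) → Mat m) : Fin (d + 2) → Mat m :=
  fun k => if h : (k : ℕ) < d + 1 then Q ⟨k, h⟩ else 0

end

noncomputable section

/-- Let `g ≥ 3` be odd and `P` a skew-symmetric `m×m` matrix polynomial of grade `g` with
zero leading coefficient, with linearization `F_P = λA − B`.  Then for every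
`X ∈ ℂ^{mg×mg}` the top-left `m×m` block of `XᵀA + AX` is zero; consequently the
top-left `m×m` block of the λ-coefficient of every pencil in the tangent space
`{λ(XᵀA + AX) − (XᵀB + BX)}` to the congruence orbit of `F_P` is zero. -/
theorem tangent_space_top_left_block_zero
    (m g : ℕ) (hg : 3 ≤ g) (hodd : Odd g)
    (P : Fin (g + 1) → Mat m)
    (hP : ∀ k, (P k)ᵀ = -(P k))
    (hPlead : P ⟨g, Nat.lt_succ_self g⟩ = 0)
    (X : Matrix (Fin g × Fin m) (Fin g × Fin m) ℂ) (a b : Fin m) :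
    (Xᵀ * linA m g P + linA m g P * X) (⟨0, by omega⟩, a) (⟨0, by omega⟩, b) = 0 := by
  have hg0 : 0 < g := by omega
  set z : Fin g := ⟨0, hg0⟩ with hz
  have hzero : ∀ (c : Fin m) (q : Fin g × Fin m), linA m g P (z, c) q = 0 := by
    intro c q
    simp only [linA, Matrix.of_apply]
    rcases eq_or_ne z q.1 with h | h
    · rw [if_pos h]
      simp [hz, hPlead]
    · rw [if_neg h]
      have h1 : ¬ ((q.1 : ℕ) = ((z : Fin g) : ℕ) + 1 ∧ ((z : Fin g) : ℕ) % 2 = 1) := by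
        simp [hz]
      have h2 : ¬ (((z : Fin g) : ℕ) = (q.1 : ℕ) + 1 ∧ (q.1 : ℕ) % 2 = 1) := by
        simp [hz]
      rw [if_neg h1, if_neg h2]
  have hzero' : ∀ (p : Fin g × Fin m) (c : Fin m), linA m g P p (z, c) = 0 := by
    intro p c
    simp only [linA, Matrix.of_apply]
    rcases eq_or_ne p.1 z with h | h
    · rw [if_pos h]
      simp [h, hz, hPlead]
    · rw [if_neg h]
      have h1 : ¬ (((z : Fin g) : ℕ) = (p.1 : ℕ) + 1 ∧ (p.1 : ℕ) % 2 = 1) := by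
        intro ⟨h1, _⟩; simp [hz] at h1
      have h2 : ¬ ((p.1 : ℕ) = ((z : Fin g) : ℕ) + 1 ∧ ((z : Fin g) : ℕ) % 2 = 1) := by
        simp [hz]
      rw [if_neg h1, if_neg h2]
  simp only [Matrix.add_apply, Matrix.mul_apply, Matrix.transpose_apply]
  rw [Finset.sum_eq_zero fun k _ => by rw [hzero' k b]; ring,
    Finset.sum_eq_zero fun k _ => by rw [hzero a k]; ring, add_zero]

end
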